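/- Let f : [−π,π]³ → M₃(ℝ) be continuous with values in symmetric 3×3 real matrices, and suppose there is c > 0 such that ⟨v, f(p)v⟩ ≥ c|p|²|v|² for all p ∈ [−π,π]³ and v ∈ ℝ³, and that f(p) is positive definite for every p ≠ 0. Then the function p ↦ ‖f(p)⁻¹‖ (operator norm, defined for p ≠ 0) is integrable on [−π,π]³. -/

import Mathlib

open scoped BigOperators
open Matrix MeasureTheory

/-- The cube `[−π, π]³`. -/
def brillouinCube : Set (Fin 3 → ℝ) :=
  Set.pi Set.univ fun _ => Set.Icc (-Real.pi) Real.pi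

/-- The Euclidean operator norm of a real 3×3 matrix. -/
noncomputable def matrixOpNorm (M : Matrix (Fin 3) (Fin 3) ℝ) : ℝ :=
  ‖Matrix.toEuclideanCLM (𝕜 := ℝ) M‖

lemma aux_oneDimIntegrable :
    IntegrableOn (fun t : ℝ => (t ^ 2) ^ (-(1:ℝ)/3)) (Set.Icc (-Real.pi) Real.pi) := by
  have hpos : IntervalIntegrable (fun t : ℝ => (t^2 : ℝ) ^ (-(1:ℝ)/3)) volume 0 Real.pi := by
    rw [intervalIntegrable_iff_integrableOn_Ioc_of_le Real.pi_pos.le]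
    have h1 : IntervalIntegrable (fun t : ℝ => t ^ (-(2:ℝ)/3)) volume 0 Real.pi :=
      intervalIntegral.intervalIntegrable_rpow' (by norm_num)
    rw [intervalIntegrable_iff_integrableOn_Ioc_of_le Real.pi_pos.le] at h1
    refine h1.congr_fun (fun t ht => ?_) measurableSet_Ioc
    rw [← Real.rpow_natCast t 2, ← Real.rpow_mul ht.1.le]
    norm_num
  have hneg : IntervalIntegrable (fun t : ℝ => (t^2 : ℝ) ^ (-(1:ℝ)/3)) volume (-Real.pi) 0 := by
    have := ((IntervalIntegrable.iff_comp_neg (by simp)).mp hpos)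
    simpa using this.symm
  have htot := hneg.trans hpos
  rw [intervalIntegrable_iff_integrableOn_Ioc_of_le (by linarith [Real.pi_pos])] at htot
  rwa [integrableOn_Icc_iff_integrableOn_Ioc]

lemma aux_opNorm_inv_le (M : Matrix (Fin 3) (Fin 3) ℝ) (hM : M.PosDef) {m : ℝ} (hm : 0 < m)
    (hlow : ∀ v : Fin 3 → ℝ, m * (∑ i, v i ^ 2) ≤ v ⬝ᵥ M.mulVec v) :
    matrixOpNorm M⁻¹ ≤ m⁻¹ := by
  have hdet : IsUnit M.det := hM.det_pos.ne'.isUnit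
  refine ContinuousLinearMap.opNorm_le_bound _ (inv_nonneg.mpr hm.le) (fun w => ?_)
  set v : EuclideanSpace ℝ (Fin 3) := toEuclideanCLM (𝕜 := ℝ) M⁻¹ w with hv
  have hTv : toEuclideanCLM (𝕜 := ℝ) M v = w := by
    have h1 : toEuclideanCLM (𝕜 := ℝ) M * toEuclideanCLM (𝕜 := ℝ) M⁻¹ = 1 := by
      rw [← _root_.map_mul, Matrix.mul_nonsing_inv _ hdet, _root_.map_one]
    calc toEuclideanCLM (𝕜 := ℝ) M v
        = (toEuclideanCLM (𝕜 := ℝ) M * toEuclideanCLM (𝕜 := ℝ) M⁻¹) w := rfl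
      _ = w := by rw [h1]; rfl
  have hnorm : ‖v‖ ^ 2 = ∑ i, (v i) ^ 2 := by
    rw [EuclideanSpace.norm_eq, Real.sq_sqrt (by positivity)]
    simp [sq_abs]
  have hinner : (inner ℝ v (toEuclideanCLM (𝕜 := ℝ) M v) : ℝ)
      = (fun i => v i) ⬝ᵥ M.mulVec (fun i => v i) := by
    have happ : ∀ i, (toEuclideanCLM (𝕜 := ℝ) M v) i = M.mulVec (fun j => v j) i := by
      intro i
      have h1 := Matrix.ofLp_toEuclideanCLM (𝕜 := ℝ) M v
      have h2 := congrFun (congrArg (fun g => (g : Fin 3 → ℝ)) h1) i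
      simpa [Matrix.toLin'_apply] using h2
    simp [PiLp.inner_apply, RCLike.inner_apply, dotProduct, happ, mul_comm]
  have hco : m * ‖v‖ ^ 2 ≤ ‖v‖ * ‖w‖ := by
    calc m * ‖v‖ ^ 2 = m * ∑ i, (v i) ^ 2 := by rw [hnorm]
      _ ≤ (fun i => v i) ⬝ᵥ M.mulVec (fun i => v i) := hlow _
      _ = (inner ℝ v (toEuclideanCLM (𝕜 := ℝ) M v) : ℝ) := hinner.symm
      _ ≤ ‖v‖ * ‖toEuclideanCLM (𝕜 := ℝ) M v‖ := real_inner_le_norm _ _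
      _ = ‖v‖ * ‖w‖ := by rw [hTv]
  rcases eq_or_ne v 0 with h0 | h0
  · have hz : ‖toEuclideanCLM (𝕜 := ℝ) M⁻¹ w‖ = 0 := by rw [← hv, h0, norm_zero]
    rw [hz]; positivity
  · have hvpos : 0 < ‖v‖ := norm_pos_iff.mpr h0
    have hmv : m * ‖v‖ ≤ ‖w‖ := by nlinarith [hco]
    calc ‖toEuclideanCLM (𝕜 := ℝ) M⁻¹ w‖ = ‖v‖ := rfl
      _ ≤ m⁻¹ * ‖w‖ := by rw [le_inv_mul_iff₀ hm]; linarith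

lemma aux_amgm (p : Fin 3 → ℝ) (hne : ∀ i, p i ≠ 0) :
    (∑ i, p i ^ 2)⁻¹ ≤ ∏ i, (p i ^ 2) ^ (-(1:ℝ)/3) := by
  have hgm : ∏ i, (p i ^ 2) ^ ((1:ℝ)/3) ≤ ∑ i, p i ^ 2 := by
    rw [Fin.prod_univ_three, Fin.sum_univ_three]
    have h := Real.geom_mean_le_arith_mean3_weighted (by norm_num : (0:ℝ) ≤ 1/3)
      (by norm_num : (0:ℝ) ≤ 1/3) (by norm_num : (0:ℝ) ≤ 1/3)
      (sq_nonneg (p 0)) (sq_nonneg (p 1)) (sq_nonneg (p 2)) (by norm_num)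
    nlinarith [sq_nonneg (p 0), sq_nonneg (p 1), sq_nonneg (p 2)]
  have hprodpos : 0 < ∏ i, (p i ^ 2) ^ ((1:ℝ)/3) := by
    refine Finset.prod_pos (fun i _ => ?_)
    exact Real.rpow_pos_of_pos ((sq_nonneg (p i)).lt_of_ne (Ne.symm (pow_ne_zero 2 (hne i)))) _
  calc (∑ i, p i ^ 2)⁻¹ ≤ (∏ i, (p i ^ 2) ^ ((1:ℝ)/3))⁻¹ := inv_anti₀ hprodpos hgm
    _ = ∏ i, (p i ^ 2) ^ (-(1:ℝ)/3) := by
        rw [← Finset.prod_inv_distrib]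
        refine Finset.prod_congr rfl (fun i _ => ?_)
        rw [← Real.rpow_neg (sq_nonneg _)]
        norm_num

/-- If `f : [−π,π]³ → M₃(ℝ)` is continuous with symmetric values,
satisfies `⟨v, f(p)v⟩ ≥ c|p|²|v|²` and is positive definite away from `p = 0`, then
`p ↦ ‖f(p)⁻¹‖` (operator norm) is integrable on `[−π,π]³`. -/
theorem integrable_inv_opNorm_of_quadratic_lower_bound
    (f : (Fin 3 → ℝ) → Matrix (Fin 3) (Fin 3) ℝ)
    (hcont : ContinuousOn f brillouinCube)
    (hsymm : ∀ p, (f p).IsSymm)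
    (c : ℝ) (hc : 0 < c)
    (hlow : ∀ p ∈ brillouinCube, ∀ v : Fin 3 → ℝ,
      c * (∑ i, p i ^ 2) * (∑ i, v i ^ 2) ≤ v ⬝ᵥ (f p).mulVec v)
    (hpd : ∀ p ∈ brillouinCube, p ≠ 0 → (f p).PosDef) :
    IntegrableOn (fun p => matrixOpNorm (f p)⁻¹) brillouinCube := by
  have hS : MeasurableSet brillouinCube :=
    MeasurableSet.univ_pi fun _ => measurableSet_Icc
  set S' : Set (Fin 3 → ℝ) := brillouinCube \ {0} with hS'def
  have hS' : MeasurableSet S' := hS.diff (measurableSet_singleton 0)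
  have hne_of_mem : ∀ p ∈ S', p ≠ 0 := fun p hp h => hp.2 (by simp [h])
  -- continuity of the integrand on S'
  have hopn : Continuous (fun M : Matrix (Fin 3) (Fin 3) ℝ => matrixOpNorm M) := by
    have hlin : Continuous (fun M : Matrix (Fin 3) (Fin 3) ℝ => toEuclideanCLM (𝕜 := ℝ) M) :=
      LinearMap.continuous_of_finiteDimensional
        (f := { toFun := fun M => toEuclideanCLM (𝕜 := ℝ) M,
                map_add' := fun a b => map_add _ a b,
                map_smul' := fun r a => map_smul _ r a })
    exact continuous_norm.comp hlin
  have hdetne : ∀ p ∈ S', (f p).det ≠ 0 :=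
    fun p hp => (hpd p hp.1 (hne_of_mem p hp)).det_pos.ne'
  have hfS' : ContinuousOn f S' := hcont.mono Set.diff_subset
  have hinvcont : ContinuousOn (fun p => (f p)⁻¹) S' := by
    have heq : ∀ p ∈ S', ((f p).det)⁻¹ • (f p).adjugate = (f p)⁻¹ := fun p hp => by
      rw [Matrix.inv_def, Ring.inverse_eq_inv']
    refine ContinuousOn.congr ?_ (fun p hp => (heq p hp).symm)
    exact (((Continuous.matrix_det continuous_id).comp_continuousOn hfS').inv₀ hdetne).smul
      ((Continuous.matrix_adjugate continuous_id).comp_continuousOn hfS')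
  have hmeas : AEStronglyMeasurable (fun p => matrixOpNorm (f p)⁻¹) (volume.restrict S') :=
    (hopn.comp_continuousOn hinvcont).aestronglyMeasurable hS'
  -- the dominating function
  set φ : ℝ → ℝ :=
    Set.indicator (Set.Icc (-Real.pi) Real.pi) (fun t => (t ^ 2) ^ (-(1:ℝ)/3)) with hφdef
  have hφ : Integrable φ :=
    (integrable_indicator_iff measurableSet_Icc).mpr aux_oneDimIntegrable
  have hgint : Integrable (fun p : Fin 3 → ℝ => c⁻¹ * ∏ i, φ (p i)) :=
    (Integrable.fintype_prod (fun _ : Fin 3 => hφ)).const_mul c⁻¹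
  -- a.e. bound
  have hae : ∀ᵐ p ∂(volume.restrict S'), ∀ i, p i ≠ 0 := by
    apply ae_restrict_of_ae
    rw [MeasureTheory.volume_pi]
    exact ae_all_iff.mpr fun i => MeasureTheory.Measure.ae_eval_ne _ i 0
  have hbound : ∀ᵐ p ∂(volume.restrict S'),
      ‖matrixOpNorm (f p)⁻¹‖ ≤ c⁻¹ * ∏ i, φ (p i) := by
    filter_upwards [hae, ae_restrict_mem hS'] with p hpne hp
    have hpne0 : p ≠ 0 := hne_of_mem p hp
    have hsum : 0 < ∑ i, p i ^ 2 := by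
      refine Finset.sum_pos (fun i _ => ?_) Finset.univ_nonempty
      exact (sq_nonneg (p i)).lt_of_ne (Ne.symm (pow_ne_zero 2 (hpne i)))
    have hm : 0 < c * ∑ i, p i ^ 2 := mul_pos hc hsum
    have h1 : matrixOpNorm (f p)⁻¹ ≤ (c * ∑ i, p i ^ 2)⁻¹ :=
      aux_opNorm_inv_le _ (hpd p hp.1 hpne0) hm (fun v => hlow p hp.1 v)
    have h4 : ∏ i, (p i ^ 2) ^ (-(1:ℝ)/3) = ∏ i, φ (p i) := by
      refine Finset.prod_congr rfl (fun i _ => ?_)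
      rw [hφdef, Set.indicator_of_mem (hp.1 i (Set.mem_univ i))]
    rw [show ‖matrixOpNorm (f p)⁻¹‖ = matrixOpNorm (f p)⁻¹ from Real.norm_of_nonneg (norm_nonneg _)]
    calc matrixOpNorm (f p)⁻¹ ≤ (c * ∑ i, p i ^ 2)⁻¹ := h1
      _ = c⁻¹ * (∑ i, p i ^ 2)⁻¹ := mul_inv _ _
      _ ≤ c⁻¹ * ∏ i, (p i ^ 2) ^ (-(1:ℝ)/3) := by
          exact mul_le_mul_of_nonneg_left (aux_amgm p hpne) (inv_nonneg.mpr hc.le)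
      _ = c⁻¹ * ∏ i, φ (p i) := by rw [h4]
  have hint' : IntegrableOn (fun p => matrixOpNorm (f p)⁻¹) S' :=
    Integrable.mono' hgint.integrableOn hmeas hbound
  have h0 : IntegrableOn (fun p => matrixOpNorm (f p)⁻¹) {(0 : Fin 3 → ℝ)} := by
    unfold IntegrableOn
    rw [Measure.restrict_eq_zero.mpr (measure_singleton _)]
    exact integrable_zero_measure
  refine (hint'.union h0).mono_set (fun p hp => ?_)
  by_cases h : p = 0
  · exact Or.inr (by simp [h])
  · exact Or.inl ⟨hp, by simp [h]⟩
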